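/- arXiv:1410.6831 — 3 statements merged into one kernel-verified Lean document; each statement's English description precedes it below -/
import Mathlib

section
/- If s̄ > b/2 with b > 0, then the unique maximizer over a ≥ 0 of a ↦ -(s̄ - a)^2 - b·e^a is a* = s̄ - W(b·e^{s̄}/2), where W is the principal Lambert W function; moreover a* > 0. -/
open Real

/-- If `s̄ > b/2` with `b > 0`, the unique maximizer on `[0,∞)` of
`a ↦ -(s̄ - a)^2 - b·exp a` is `a* = s̄ - W((b/2)·exp s̄)`, where `W` is the principal
Lambert W function, and moreover `a* > 0`. -/
theorem stmt_2 (b sbar : ℝ) (hb : 0 < b) (hs : sbar > b / 2)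
    (W : ℝ → ℝ) (hW : ∀ y : ℝ, 0 ≤ y → 0 ≤ W y ∧ W y * Real.exp (W y) = y) :
    0 < sbar - W (b / 2 * Real.exp sbar) ∧
    (∀ a : ℝ, 0 ≤ a →
      -(sbar - a) ^ 2 - b * Real.exp a
        ≤ -(sbar - (sbar - W (b / 2 * Real.exp sbar))) ^ 2
            - b * Real.exp (sbar - W (b / 2 * Real.exp sbar))) ∧
    (∀ a : ℝ, 0 ≤ a →
      -(sbar - a) ^ 2 - b * Real.exp a
        = -(sbar - (sbar - W (b / 2 * Real.exp sbar))) ^ 2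
            - b * Real.exp (sbar - W (b / 2 * Real.exp sbar)) →
      a = sbar - W (b / 2 * Real.exp sbar)) := by
  have hs0 : 0 < sbar := lt_trans (by linarith) hs
  have hy : 0 ≤ b / 2 * Real.exp sbar := by positivity
  obtain ⟨hw0, hwe⟩ := hW _ hy
  set w := W (b / 2 * Real.exp sbar) with hwdef
  -- key identity: b * exp (sbar - w) = 2 * w
  have hkey : b * Real.exp (sbar - w) = 2 * w := by
    rw [Real.exp_sub]
    field_simp
    linarith [hwe]
  have hws : w < sbar := by
    by_contra h
    push_neg at h
    have h1 : sbar * Real.exp sbar ≤ w * Real.exp w :=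
      mul_le_mul h (Real.exp_le_exp.mpr h) (Real.exp_nonneg _) (le_trans hs0.le h)
    have h2 : b / 2 * Real.exp sbar < sbar * Real.exp sbar :=
      mul_lt_mul_of_pos_right hs (Real.exp_pos _)
    rw [hwe] at h1
    linarith
  refine ⟨by linarith, ?_, ?_⟩
  · intro a _
    have hd := Real.add_one_le_exp (a - (sbar - w))
    have hexp : Real.exp a = Real.exp (sbar - w) * Real.exp (a - (sbar - w)) := by
      rw [← Real.exp_add]; ring_nf
    rw [hexp]
    nlinarith [mul_nonneg hw0 (by linarith :
        (0:ℝ) ≤ Real.exp (a - (sbar - w)) - 1 - (a - (sbar - w))),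
      sq_nonneg (a - (sbar - w)), Real.exp_pos (sbar - w)]
  · intro a _ heq
    have hd := Real.add_one_le_exp (a - (sbar - w))
    have hexp : Real.exp a = Real.exp (sbar - w) * Real.exp (a - (sbar - w)) := by
      rw [← Real.exp_add]; ring_nf
    rw [hexp] at heq
    have hsq : (a - (sbar - w)) ^ 2 ≤ 0 := by
      nlinarith [mul_nonneg hw0 (by linarith :
          (0:ℝ) ≤ Real.exp (a - (sbar - w)) - 1 - (a - (sbar - w)))]
    have h0 : (a - (sbar - w)) ^ 2 = 0 := le_antisymm hsq (sq_nonneg _)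
    have := pow_eq_zero_iff (n := 2) (by norm_num) |>.mp h0
    linarith [sub_eq_zero.mp this]
end

section
/- For b > 0, any sequence satisfying the equilibrium recursion with 0 = s_0 < s_1 satisfies s_{m+1} − s_m > s_m − s_{m-1} + 2b for all m ≥ 1; in particular consecutive interval lengths are strictly increasing. -/
open Real

/-- For `b > 0`, along any equilibrium sequence (arbitrage condition plus aggregator
critical points, with nonnegative actions) the interval lengths grow by more
than `2b` at each step. -/
theorem stmt_9 (b : ℝ) (hb : 0 < b) (s a : ℕ → ℝ)
    (hmono : StrictMono s) (hs0 : s 0 = 0) (hs1 : 0 < s 1)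
    (ha : ∀ m : ℕ, 2 * a m + b * Real.exp (a m) = s m + s (m + 1))
    (hanneg : ∀ m : ℕ, 0 ≤ a m)
    (harb : ∀ m : ℕ, 1 ≤ m → s m = (a (m - 1) + a m) / 2) :
    ∀ m : ℕ, 1 ≤ m →
      (s (m + 1) - s m ≥ s m - s (m - 1) + 2 * b * Real.exp (a (m - 1))) ∧
      (s (m + 1) - s m > s m - s (m - 1)) ∧
      (s (m + 1) - s m > s m - s (m - 1) + 2 * b) := by
  intro m hm
  obtain ⟨k, rfl⟩ : ∃ k, m = k + 1 := ⟨m - 1, by omega⟩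
  simp only [Nat.add_sub_cancel]
  have h1 := ha k
  have h2 := ha (k + 1)
  have h3 := harb (k + 1) (by omega)
  simp only [Nat.add_sub_cancel] at h3
  have hsk1 : 0 < s (k + 1) := hs0 ▸ hmono (Nat.succ_pos k)
  have hincr : s (k + 1) < s (k + 2) := hmono (by omega)
  have hsk : s k < s (k + 1) := hmono (by omega)
  have hak : a k < a (k + 1) := by
    by_contra h
    push_neg at h
    have he : Real.exp (a (k + 1)) ≤ Real.exp (a k) := Real.exp_le_exp.2 h
    nlinarith
  have hek : (1 : ℝ) ≤ Real.exp (a k) := Real.one_le_exp (hanneg k)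
  have he2 : Real.exp (a k) ≤ Real.exp (a (k + 1)) := Real.exp_le_exp.2 hak.le
  have he2' : Real.exp (a k) < Real.exp (a (k + 1)) := Real.exp_lt_exp.2 hak
  have hbe : 0 < b * (Real.exp (a (k + 1)) - Real.exp (a k)) :=
    mul_pos hb (by linarith)
  have hb1 : 0 ≤ b * (Real.exp (a k) - 1) := mul_nonneg hb.le (by linarith)
  have hb2 : 0 ≤ b * (Real.exp (a (k + 1)) - 1) := mul_nonneg hb.le (by linarith)
  refine ⟨?_, ?_, ?_⟩ <;> nlinarith [Real.exp_pos (a k)]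
end

section
/- For each b > 0 and each L ≥ 1 such that an equilibrium partition with L intervals exists, the boundary points are uniquely determined by the two-point boundary problem: s_0 = 0, s_L = 1, and the recursion s_{m+1} = φ_b(2s_m − φ_b^{-1}(s_{m-1}+s_m)) − s_m; uniqueness follows from strict monotonicity of the map s_1 ↦ s_L(s_1). -/
open Real

/-- Uniqueness of the `L`-interval equilibrium partition: along the equilibrium
recursion (φ_b(a_m) = s_{m-1} + s_m, s_{m+1} = φ_b(2 s_m − a_m) − s_m) starting
from `s 0 = 0`, `s 1 = t`, the end point `t ↦ s_L(t)` is strictly increasing on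
the domain where the sequence is increasing; hence at most one `t` yields `s_L = 1`. -/
theorem stmt_18 (b : ℝ) (hb : 0 < b) (L : ℕ) (hL : 1 ≤ L)
    (D : Set ℝ) (s : ℝ → ℕ → ℝ) (a : ℝ → ℕ → ℝ)
    (h : ∀ t ∈ D, 0 < t ∧ s t 0 = 0 ∧ s t 1 = t ∧
      (∀ m : ℕ, 1 ≤ m → m < L →
        (2 * a t m + b * Real.exp (a t m) = s t (m - 1) + s t m ∧
         s t (m + 1)
           = 2 * (2 * s t m - a t m) + b * Real.exp (2 * s t m - a t m) - s t m)) ∧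
      (∀ m : ℕ, m < L → s t m < s t (m + 1))) :
    StrictMonoOn (fun t => s t L) D ∧
    (∀ t₁ ∈ D, ∀ t₂ ∈ D, s t₁ L = 1 → s t₂ L = 1 → t₁ = t₂) := by
  have hmono : StrictMonoOn (fun t => s t L) D := by
    intro t₁ ht₁ t₂ ht₂ hlt
    obtain ⟨hp1, hs01, hs11, hrec1, hinc1⟩ := h t₁ ht₁
    obtain ⟨hp2, hs02, hs12, hrec2, hinc2⟩ := h t₂ ht₂
    -- key induction: differences are nonnegative, positive at m, nondecreasing
    have key : ∀ m : ℕ, 1 ≤ m → m ≤ L →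
        (0 ≤ s t₂ (m - 1) - s t₁ (m - 1) ∧
         s t₂ (m - 1) - s t₁ (m - 1) ≤ s t₂ m - s t₁ m ∧
         0 < s t₂ m - s t₁ m) := by
      intro m hm
      induction m, hm using Nat.le_induction with
      | base =>
        intro _
        simp only [Nat.sub_self]
        rw [hs01, hs02, hs11, hs12]
        constructor
        · norm_num
        constructor
        · linarith
        · linarith
      | succ n hn ih =>
        intro hnL
        have hnL' : n < L := by omega
        have ⟨ih0, ih1, ih2⟩ := ih (le_of_lt hnL')
        obtain ⟨e1, e2⟩ := hrec1 n hn hnL'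
        obtain ⟨e3, e4⟩ := hrec2 n hn hnL'
        have hsucc : n + 1 - 1 = n := by omega
        rw [hsucc]
        -- a t₁ n ≤ a t₂ n
        have haa : a t₁ n ≤ a t₂ n := by
          by_contra hco
          push_neg at hco
          have hexp : Real.exp (a t₂ n) < Real.exp (a t₁ n) := Real.exp_lt_exp.mpr hco
          nlinarith [mul_pos hb (sub_pos.mpr hexp)]
        -- 2 (Δa) ≤ δ(n-1) + δn
        have hexp2 : Real.exp (a t₁ n) ≤ Real.exp (a t₂ n) := Real.exp_le_exp.mpr haa
        have ha2 : 2 * (a t₂ n - a t₁ n) ≤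
            (s t₂ (n - 1) - s t₁ (n - 1)) + (s t₂ n - s t₁ n) := by
          nlinarith [mul_nonneg hb.le (sub_nonneg.mpr hexp2)]
        -- c₁ < c₂
        have hc : 2 * s t₁ n - a t₁ n < 2 * s t₂ n - a t₂ n := by linarith
        have hce : Real.exp (2 * s t₁ n - a t₁ n) < Real.exp (2 * s t₂ n - a t₂ n) :=
          Real.exp_lt_exp.mpr hc
        have hbe : 0 < b * (Real.exp (2 * s t₂ n - a t₂ n) -
            Real.exp (2 * s t₁ n - a t₁ n)) := mul_pos hb (sub_pos.mpr hce)
        refine ⟨by linarith, by linarith, by linarith⟩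
    have := (key L hL le_rfl).2.2
    simpa using by linarith
  refine ⟨hmono, ?_⟩
  intro t₁ ht₁ t₂ ht₂ h1 h2
  exact hmono.injOn ht₁ ht₂ (by simp [h1, h2])
end
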